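/- With f₀ as above (a = (√5+1)/2, b = (√5-1)/2), one has 0 ≤ f₀'''(x) ≤ 2 for all x ∈ [−1,0]. -/

import Mathlib

noncomputable def aK : ℝ := (Real.sqrt 5 + 1) / 2
noncomputable def bK : ℝ := (Real.sqrt 5 - 1) / 2

noncomputable def f₀ : ℝ → ℝ := fun x =>
  1 / (Real.sqrt aK * (aK + bK)) * Real.sinh (Real.sqrt aK * x)
    - 1 / (Real.sqrt bK * (aK + bK)) * Real.sin (Real.sqrt bK * x)

noncomputable def g₀ : ℝ → ℝ := fun x =>
  1 / (aK * (aK + bK)) * Real.cosh (Real.sqrt aK * x)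
    + 1 / (bK * (aK + bK)) * Real.cos (Real.sqrt bK * x)
    - 1 / (aK * (aK + bK)) - 1 / (bK * (aK + bK))

open Real

lemma sqrt5_lb : (2.236 : ℝ) < Real.sqrt 5 := by
  rw [show (2.236:ℝ) = Real.sqrt (2.236^2) by rw [Real.sqrt_sq]; norm_num]
  exact Real.sqrt_lt_sqrt (by positivity) (by norm_num)

lemma sqrt5_ub : Real.sqrt 5 < 2.2361 := by
  rw [show (2.2361:ℝ) = Real.sqrt (2.2361^2) by rw [Real.sqrt_sq]; norm_num]
  exact Real.sqrt_lt_sqrt (by norm_num) (by norm_num)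

lemma aK_pos : (0:ℝ) < aK := by unfold aK; have := sqrt5_lb; linarith
lemma bK_pos : (0:ℝ) < bK := by unfold bK; have := sqrt5_lb; linarith
lemma ab_pos : (0:ℝ) < aK + bK := by have := aK_pos; have := bK_pos; linarith

lemma sA_sq : Real.sqrt aK * Real.sqrt aK = aK := Real.mul_self_sqrt aK_pos.le
lemma sB_sq : Real.sqrt bK * Real.sqrt bK = bK := Real.mul_self_sqrt bK_pos.le
lemma sA_pos : 0 < Real.sqrt aK := Real.sqrt_pos.2 aK_pos
lemma sB_pos : 0 < Real.sqrt bK := Real.sqrt_pos.2 bK_pos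

lemma hd0 (x : ℝ) : HasDerivAt f₀
    (1/(aK+bK) * Real.cosh (Real.sqrt aK * x) - 1/(aK+bK) * Real.cos (Real.sqrt bK * x)) x := by
  have h1 := (((hasDerivAt_id x).const_mul (Real.sqrt aK)).sinh).const_mul
    (1 / (Real.sqrt aK * (aK + bK)))
  have h2 := (((hasDerivAt_id x).const_mul (Real.sqrt bK)).sin).const_mul
    (1 / (Real.sqrt bK * (aK + bK)))
  have h := h1.sub h2
  convert h using 1
  · rfl
  · rfl
  · rfl
  have hA := sA_pos.ne'
  have hB := sB_pos.ne'
  have hab := ab_pos.ne'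
  simp only [id]
  field_simp

lemma hd1 (x : ℝ) : HasDerivAt
    (fun x => 1/(aK+bK) * Real.cosh (Real.sqrt aK * x) - 1/(aK+bK) * Real.cos (Real.sqrt bK * x))
    (1/(aK+bK) * (Real.sqrt aK * Real.sinh (Real.sqrt aK * x))
      + 1/(aK+bK) * (Real.sqrt bK * Real.sin (Real.sqrt bK * x))) x := by
  have h1 := (((hasDerivAt_id x).const_mul (Real.sqrt aK)).cosh).const_mul (1/(aK+bK))
  have h2 := (((hasDerivAt_id x).const_mul (Real.sqrt bK)).cos).const_mul (1/(aK+bK))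
  have h := h1.sub h2
  convert h using 1
  · rfl
  · rfl
  · rfl
  simp only [id]
  ring

lemma hd2 (x : ℝ) : HasDerivAt
    (fun x => 1/(aK+bK) * (Real.sqrt aK * Real.sinh (Real.sqrt aK * x))
      + 1/(aK+bK) * (Real.sqrt bK * Real.sin (Real.sqrt bK * x)))
    (1/(aK+bK) * (aK * Real.cosh (Real.sqrt aK * x))
      + 1/(aK+bK) * (bK * Real.cos (Real.sqrt bK * x))) x := by
  have h1 := ((((hasDerivAt_id x).const_mul (Real.sqrt aK)).sinh).const_mul
    (1/(aK+bK) * Real.sqrt aK))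
  have h2 := ((((hasDerivAt_id x).const_mul (Real.sqrt bK)).sin).const_mul
    (1/(aK+bK) * Real.sqrt bK))
  have h := h1.add h2
  have h' : HasDerivAt
      (fun x => 1/(aK+bK) * (Real.sqrt aK * Real.sinh (Real.sqrt aK * x))
        + 1/(aK+bK) * (Real.sqrt bK * Real.sin (Real.sqrt bK * x)))
      (1/(aK+bK) * Real.sqrt aK * (Real.cosh (Real.sqrt aK * x) * (Real.sqrt aK * 1))
        + 1/(aK+bK) * Real.sqrt bK * (Real.cos (Real.sqrt bK * x) * (Real.sqrt bK * 1))) x := by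
    convert h using 1
    · rfl
    · rfl
    ext y; simp only [id, Pi.add_apply]; ring_nf
    rfl
  convert h' using 1
  have e1 := sA_sq; have e2 := sB_sq
  linear_combination (1/(aK+bK) * Real.cosh (Real.sqrt aK * x)) * e1.symm
    + (1/(aK+bK) * Real.cos (Real.sqrt bK * x)) * e2.symm

lemma key (x : ℝ) : iteratedDeriv 3 f₀ x =
    1/(aK+bK) * (aK * Real.cosh (Real.sqrt aK * x))
      + 1/(aK+bK) * (bK * Real.cos (Real.sqrt bK * x)) := by
  have e0 : deriv f₀ = fun x => 1/(aK+bK) * Real.cosh (Real.sqrt aK * x)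
      - 1/(aK+bK) * Real.cos (Real.sqrt bK * x) := funext fun x => (hd0 x).deriv
  have e1 : (deriv fun x => 1/(aK+bK) * Real.cosh (Real.sqrt aK * x)
      - 1/(aK+bK) * Real.cos (Real.sqrt bK * x))
      = fun x => 1/(aK+bK) * (Real.sqrt aK * Real.sinh (Real.sqrt aK * x))
      + 1/(aK+bK) * (Real.sqrt bK * Real.sin (Real.sqrt bK * x)) :=
    funext fun x => (hd1 x).deriv
  rw [show (3:ℕ) = 2 + 1 by rfl, iteratedDeriv_succ, iteratedDeriv_succ, iteratedDeriv_succ,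
    iteratedDeriv_zero, e0, e1]
  exact (hd2 x).deriv

lemma aK_lt : aK < 1.6185 := by unfold aK; nlinarith [sqrt5_ub]
lemma bK_gt : (0.618:ℝ) < bK := by unfold bK; nlinarith [sqrt5_lb]

lemma sqrtA_le : Real.sqrt aK ≤ 1.28 := by
  rw [show (1.28:ℝ) = Real.sqrt (1.28^2) by rw [Real.sqrt_sq] <;> norm_num]
  apply Real.sqrt_le_sqrt; nlinarith [aK_lt]

lemma cosh_bound : Real.cosh (Real.sqrt aK) ≤ 2.12 := by
  rw [Real.cosh_eq]
  have h1 : Real.exp (Real.sqrt aK) ≤ Real.exp 1.28 := Real.exp_le_exp.2 sqrtA_le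
  have h2 : Real.exp 1.28 ≤ 3.78 := by
    rw [show (1.28:ℝ) = 1 + 0.28 by norm_num, Real.exp_add]
    have e1 := Real.exp_one_lt_d9
    have e2 : Real.exp 0.28 ≤ 1/0.72 := by
      have h := Real.add_one_le_exp (-0.28 : ℝ)
      rw [Real.exp_neg] at h
      have hp := Real.exp_pos (0.28:ℝ)
      have h72 := mul_le_mul_of_nonneg_right h hp.le
      rw [inv_mul_cancel₀ hp.ne'] at h72
      linarith
    nlinarith [Real.exp_pos (0.28:ℝ), Real.exp_pos (1:ℝ)]
  have h3 : Real.exp (-(Real.sqrt aK)) ≤ 1/2.27 := by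
    rw [Real.exp_neg]
    have h4 : (2.27:ℝ) ≤ Real.exp (Real.sqrt aK) := by
      have h6 := Real.add_one_le_exp (Real.sqrt aK)
      have h5 : (1.27:ℝ) ≤ Real.sqrt aK := by
        rw [show (1.27:ℝ) = Real.sqrt (1.27^2) by rw [Real.sqrt_sq] <;> norm_num]
        apply Real.sqrt_le_sqrt; unfold aK; nlinarith [sqrt5_lb]
      linarith
    have hp := Real.exp_pos (Real.sqrt aK)
    rw [inv_le_comm₀ hp (by norm_num)] at *
    nlinarith
  linarith

lemma sqrtB_le : Real.sqrt bK ≤ 1 := by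
  apply Real.sqrt_le_one.mpr; unfold bK; nlinarith [sqrt5_ub]

theorem f₀_third_deriv_bounds :
    ∀ x ∈ Set.Icc (-1 : ℝ) 0,
      0 ≤ iteratedDeriv 3 f₀ x ∧ iteratedDeriv 3 f₀ x ≤ 2 := by
  intro x hx
  obtain ⟨hx1, hx2⟩ := hx
  rw [key]
  have hab := ab_pos
  have hA := aK_pos
  have hB := bK_pos
  have hsB := sB_pos
  have hsA := sA_pos
  have htB := sqrtB_le
  have hcosh1 : 1 ≤ Real.cosh (Real.sqrt aK * x) := Real.one_le_cosh _
  have hcos0 : 0 ≤ Real.cos (Real.sqrt bK * x) := by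
    apply Real.cos_nonneg_of_mem_Icc
    have hpi : (3:ℝ) < Real.pi := Real.pi_gt_three
    constructor
    · nlinarith [mul_le_mul_of_nonneg_left hx1 hsB.le]
    · nlinarith [mul_nonpos_of_nonneg_of_nonpos hsB.le hx2]
  constructor
  · have h1 : 0 ≤ 1/(aK+bK) * (aK * Real.cosh (Real.sqrt aK * x)) := by positivity
    have h2 : 0 ≤ 1/(aK+bK) * (bK * Real.cos (Real.sqrt bK * x)) := by positivity
    linarith
  · have hch : Real.cosh (Real.sqrt aK * x) ≤ Real.cosh (Real.sqrt aK) := by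
      apply Real.cosh_le_cosh.2
      rw [abs_mul, abs_of_nonneg hsA.le, abs_of_nonpos hx2]
      nlinarith
    have hcos1 : Real.cos (Real.sqrt bK * x) ≤ 1 := Real.cos_le_one _
    have hcb := cosh_bound
    have heq : 1/(aK+bK) * (aK * Real.cosh (Real.sqrt aK * x))
        + 1/(aK+bK) * (bK * Real.cos (Real.sqrt bK * x))
        = (aK * Real.cosh (Real.sqrt aK * x) + bK * Real.cos (Real.sqrt bK * x))/(aK+bK) := by
      ring
    rw [heq, div_le_iff₀ hab]
    nlinarith [aK_lt, bK_gt, mul_le_mul_of_nonneg_left (hch.trans hcb) hA.le,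
      mul_le_mul_of_nonneg_left hcos1 hB.le]
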